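/- Let f : ℝ → [0,∞) be a measurable probability density (∫_ℝ f = 1) with cumulative distribution function F(t) = ∫_{−∞}^t f(x) dx, let M be a positive integer, p ≥ 1, and define the binned probabilities r_k = F((k+1)/M) − F(k/M) for k ∈ ℤ. Then ∑_{k∈ℤ} |k/M|^p · √(r_k) ≥ √M · 2^{−p} · ∫_{ℝ \ [0, 1/M]} |x|^p √(f(x)) dx (both sides possibly infinite). In particular, if ∫_ℝ |x|^p √(f(x)) dx > 0, the left-hand side tends to infinity at rate √M as M → ∞, so the summability condition for the discretized measures cannot hold uniformly in the bin width. -/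

import Mathlib

open MeasureTheory

/-- for the binning `r_k = F((k+1)/M) − F(k/M)` of a continuous
distribution with density `f` onto the grid `(k/M)_{k∈ℤ}`, the summability functional is
bounded below by `√M · 2^{−p} ∫_{ℝ∖[0,1/M]} |x|^p √(f x) dx` (both sides possibly
infinite, hence stated in `ℝ≥0∞`). -/
theorem statement10
    (f : ℝ → ℝ) (hfmeas : Measurable f) (hf0 : ∀ x, 0 ≤ f x)
    (hfint : Integrable f) (hf1 : ∫ x, f x = 1)
    (M : ℕ) (hM : 0 < M) (p : ℝ) (hp : 1 ≤ p) :
    ENNReal.ofReal (Real.sqrt M * (2 : ℝ) ^ (-p)) *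
        ∫⁻ x in (Set.Icc (0 : ℝ) (1 / M))ᶜ, ENNReal.ofReal (|x| ^ p * Real.sqrt (f x)) ≤
      ∑' k : ℤ, ENNReal.ofReal (|(k : ℝ) / M| ^ p *
        Real.sqrt ((∫ x in Set.Iic (((k : ℝ) + 1) / M), f x) -
          ∫ x in Set.Iic ((k : ℝ) / M), f x)) := by
  have hMR : (0 : ℝ) < M := Nat.cast_pos.mpr hM
  set S : Set ℝ := (Set.Icc (0 : ℝ) (1 / M))ᶜ with hS
  set B : ℤ → Set ℝ := fun k => Set.Ioc ((k : ℝ) / M) (((k : ℝ) + 1) / M) with hBdef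
  set g : ℝ → ENNReal := fun x => ENNReal.ofReal (|x| ^ p * Real.sqrt (f x)) with hg
  set c : ENNReal := ENNReal.ofReal (Real.sqrt M * (2 : ℝ) ^ (-p)) with hc
  have hle : ∀ k : ℤ, (k : ℝ) / M ≤ ((k : ℝ) + 1) / M := fun k =>
    (div_le_div_iff_of_pos_right hMR).mpr (by linarith)
  have hBmeas : ∀ k, MeasurableSet (B k) := fun k => measurableSet_Ioc
  -- bins are pairwise disjoint
  have hBdisj : Pairwise (Function.onFun Disjoint B) := by
    intro i j hij
    rw [Function.onFun, hBdef]
    rw [Set.Ioc_disjoint_Ioc]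
    rcases lt_or_gt_of_ne hij with h | h
    · have : ((i : ℝ) + 1) / M ≤ (j : ℝ) / M := by
        apply (div_le_div_iff_of_pos_right hMR).mpr
        have : (i : ℝ) + 1 ≤ j := by exact_mod_cast h
        linarith
      exact le_trans (min_le_left _ _) (this.trans (le_max_right _ _))
    · have : ((j : ℝ) + 1) / M ≤ (i : ℝ) / M := by
        apply (div_le_div_iff_of_pos_right hMR).mpr
        have : (j : ℝ) + 1 ≤ i := by exact_mod_cast h
        linarith
      exact le_trans (min_le_right _ _) (this.trans (le_max_left _ _))
  -- bins cover ℝ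
  have hBcover : (⋃ k, B k) = Set.univ := by
    ext x
    simp only [Set.mem_iUnion, Set.mem_univ, iff_true, hBdef, Set.mem_Ioc]
    refine ⟨⌈x * M⌉ - 1, ?_, ?_⟩
    · rw [div_lt_iff₀ hMR]
      push_cast
      have := Int.ceil_lt_add_one (x * M)
      linarith
    · rw [le_div_iff₀ hMR]
      push_cast
      have := Int.le_ceil (x * M)
      linarith
  -- the value of r_k as a bin integral
  have hr : ∀ k : ℤ, (∫ x in Set.Iic (((k : ℝ) + 1) / M), f x) -
      (∫ x in Set.Iic ((k : ℝ) / M), f x) = ∫ x in B k, f x := by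
    intro k
    rw [intervalIntegral.integral_Iic_sub_Iic hfint.integrableOn hfint.integrableOn,
      intervalIntegral.integral_of_le (hle k)]
  -- decompose the set integral over bins
  have hSdecomp : ∫⁻ x in S, g x = ∑' k : ℤ, ∫⁻ x in B k ∩ S, g x := by
    rw [← lintegral_iUnion (fun k => (hBmeas k).inter (measurableSet_Icc.compl))
      (hBdisj.mono fun i j h => h.mono Set.inter_subset_left Set.inter_subset_left) g]
    rw [← Set.iUnion_inter, hBcover, Set.univ_inter]
  rw [hSdecomp, ← ENNReal.tsum_mul_left]
  refine ENNReal.tsum_le_tsum fun k => ?_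
  rcases eq_or_ne k 0 with rfl | hk
  · -- k = 0 : the bin is inside Icc 0 (1/M), so the intersection is empty
    have hB0 : B 0 ∩ S = ∅ := by
      apply Set.eq_empty_iff_forall_notMem.mpr
      rintro x ⟨hx1, hx2⟩
      apply hx2
      simp only [hBdef, Int.cast_zero, zero_div, zero_add, Set.mem_Ioc] at hx1
      exact ⟨hx1.1.le, hx1.2⟩
    rw [hB0]
    simp
  · -- k ≠ 0
    have hknz : (k : ℝ) ≠ 0 := Int.cast_ne_zero.mpr hk
    have habs : ∀ x ∈ B k, |x| ≤ 2 * |(k : ℝ) / M| := by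
      intro x hx
      simp only [hBdef, Set.mem_Ioc] at hx
      rcases lt_or_ge (k : ℝ) 0 with hkneg | hkpos
      · have hk1 : (k : ℝ) + 1 ≤ 0 := by
          have hkz : (k : ℤ) < 0 := by exact_mod_cast hkneg
          have : (k : ℤ) ≤ -1 := by omega
          have : (k : ℝ) ≤ -1 := by exact_mod_cast this
          linarith
        have hx0 : x ≤ 0 := hx.2.trans (div_nonpos_of_nonpos_of_nonneg hk1 hMR.le)
        have hkM : (k : ℝ) / M < 0 := div_neg_of_neg_of_pos hkneg hMR
        rw [abs_of_nonpos hx0, abs_of_neg hkM]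
        have hxk : -x ≤ -((k : ℝ) / M) := by linarith [hx.1]
        linarith
      · have hkpos' : (0 : ℝ) < k := lt_of_le_of_ne hkpos (Ne.symm hknz)
        have hk1 : (1 : ℝ) ≤ k := by
          have h0 : (0 : ℤ) ≤ k := by exact_mod_cast hkpos
          have : (1 : ℤ) ≤ k := by omega
          exact_mod_cast this
        have hx0 : 0 < x := lt_of_le_of_lt (by positivity) hx.1
        rw [abs_of_pos hx0, abs_of_pos (div_pos hkpos' hMR)]
        have : x ≤ ((k : ℝ) + 1) / M := hx.2
        have h2 : ((k : ℝ) + 1) / M ≤ 2 * ((k : ℝ) / M) := by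
          rw [div_le_iff₀ hMR]
          have : 2 * ((k:ℝ)/M) * M = 2 * k := by field_simp
          rw [this]
          linarith
        linarith
    -- pointwise bound on the bin
    have hpt : ∀ x ∈ B k, g x ≤
        ENNReal.ofReal ((2:ℝ) ^ p * |(k : ℝ) / M| ^ p) * ENNReal.ofReal (Real.sqrt (f x)) := by
      intro x hx
      rw [hg, ← ENNReal.ofReal_mul (by positivity)]
      apply ENNReal.ofReal_le_ofReal
      have h1 : |x| ^ p ≤ (2 * |(k : ℝ) / M|) ^ p :=
        Real.rpow_le_rpow (abs_nonneg x) (habs x hx) (by linarith)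
      rw [Real.mul_rpow (by norm_num) (abs_nonneg _)] at h1
      have := Real.sqrt_nonneg (f x)
      nlinarith [Real.sqrt_nonneg (f x), Real.rpow_nonneg (abs_nonneg x) p]
    -- Cauchy–Schwarz on the bin
    set r : ℝ := ∫ x in B k, f x with hrdef
    have hrnn : 0 ≤ r := integral_nonneg fun x => hf0 x
    have hCS : ∫⁻ x in B k, ENNReal.ofReal (Real.sqrt (f x)) ≤
        ENNReal.ofReal (Real.sqrt r) * ENNReal.ofReal (Real.sqrt (1 / M)) := by
      have hconj : Real.HolderConjugate 2 2 := Real.HolderConjugate.two_two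
      have hmφ : AEMeasurable (fun x => ENNReal.ofReal (Real.sqrt (f x)))
          (volume.restrict (B k)) :=
        (hfmeas.sqrt.ennreal_ofReal).aemeasurable
      have H := ENNReal.lintegral_mul_le_Lp_mul_Lq (volume.restrict (B k)) hconj hmφ
        aemeasurable_const (g := fun _ => 1)
      simp only [Pi.mul_apply, mul_one, ENNReal.one_rpow, lintegral_one,
        Measure.restrict_apply_univ] at H
      have hsq : ∀ x : ℝ, ENNReal.ofReal (Real.sqrt (f x)) ^ (2 : ℝ)
          = ENNReal.ofReal (f x) := by
        intro x
        rw [ENNReal.ofReal_rpow_of_nonneg (Real.sqrt_nonneg _) (by norm_num),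
          Real.rpow_two, Real.sq_sqrt (hf0 x)]
      simp only [hsq] at H
      have hintf : ∫⁻ x in B k, ENNReal.ofReal (f x) = ENNReal.ofReal r := by
        rw [hrdef, ofReal_integral_eq_lintegral_ofReal hfint.integrableOn
          (Filter.Eventually.of_forall hf0)]
      have hvol : volume (B k) = ENNReal.ofReal (1 / M) := by
        rw [hBdef]
        simp only [Real.volume_Ioc]
        congr 1
        field_simp
        ring
      rw [hintf, hvol] at H
      refine H.trans_eq ?_
      rw [ENNReal.ofReal_rpow_of_nonneg hrnn (by norm_num),
        ENNReal.ofReal_rpow_of_nonneg (by positivity) (by norm_num),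
        Real.sqrt_eq_rpow, Real.sqrt_eq_rpow]
    -- combine
    calc c * ∫⁻ x in B k ∩ S, g x
        ≤ c * ∫⁻ x in B k, g x := by
          exact mul_le_mul_right (lintegral_mono_set Set.inter_subset_left) c
      _ ≤ c * (ENNReal.ofReal ((2:ℝ) ^ p * |(k : ℝ) / M| ^ p) *
            ∫⁻ x in B k, ENNReal.ofReal (Real.sqrt (f x))) := by
          apply mul_le_mul_right
          rw [← lintegral_const_mul _ (hfmeas.sqrt.ennreal_ofReal)]
          exact setLIntegral_mono ((hfmeas.sqrt.ennreal_ofReal).const_mul _)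
            hpt
      _ ≤ c * (ENNReal.ofReal ((2:ℝ) ^ p * |(k : ℝ) / M| ^ p) *
            (ENNReal.ofReal (Real.sqrt r) * ENNReal.ofReal (Real.sqrt (1 / M)))) := by
          exact mul_le_mul_right (mul_le_mul_right hCS _) c
      _ = ENNReal.ofReal (|(k : ℝ) / M| ^ p * Real.sqrt r) := by
          rw [hc, ← ENNReal.ofReal_mul (Real.sqrt_nonneg r),
            ← ENNReal.ofReal_mul (by positivity), ← ENNReal.ofReal_mul (by positivity)]
          congr 1
          have h2 : (2:ℝ) ^ (-p) * (2:ℝ) ^ p = 1 := by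
            rw [← Real.rpow_add (by norm_num)]
            simp
          have hMs : Real.sqrt M * Real.sqrt (1 / M) = 1 := by
            rw [← Real.sqrt_mul hMR.le]
            rw [mul_one_div, div_self hMR.ne', Real.sqrt_one]
          calc Real.sqrt M * (2:ℝ) ^ (-p) * ((2:ℝ) ^ p * |(k:ℝ)/M| ^ p * (Real.sqrt r * Real.sqrt (1/M)))
              = ((2:ℝ) ^ (-p) * (2:ℝ) ^ p) * (Real.sqrt M * Real.sqrt (1/M)) *
                (|(k:ℝ)/M| ^ p * Real.sqrt r) := by ring
            _ = |(k:ℝ)/M| ^ p * Real.sqrt r := by rw [h2, hMs]; ring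
      _ = ENNReal.ofReal (|(k : ℝ) / M| ^ p *
            Real.sqrt ((∫ x in Set.Iic (((k : ℝ) + 1) / M), f x) -
              ∫ x in Set.Iic ((k : ℝ) / M), f x)) := by rw [hrdef, hr k]
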